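/- The normalized variance of the diagonal estimator satisfies Var(ω̄_ii(φ))/ω_ii² = 3/((1+d_i)ω_ii) − 2/((1+d_i)ω_ii)² − 1 ≤ 1/8 for any ω_ii > 0. -/

import Mathlib

open Finset

/-- A spanning converging forest of the digraph with edge relation `E`,
encoded by its successor map `f : V → Option V` (`f i = some j` means edge `(i,j)`
is in the forest, `f i = none` means `i` is a root).  Acyclicity is expressed by a
height function that strictly decreases along edges. -/
def IsSCF {V : Type*} (E : V → V → Prop) (f : V → Option V) : Prop :=
  (∀ i j, f i = some j → E i j) ∧ ∃ h : V → ℕ, ∀ i j, f i = some j → h j < h i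

open scoped Classical in
/-- The set `F` of all spanning converging forests of the digraph `E`. -/
noncomputable def forests {V : Type*} [Fintype V] [DecidableEq V]
    (E : V → V → Prop) : Finset (V → Option V) :=
  Finset.univ.filter (IsSCF E)

/-- The root `r_φ(i)` of the tree containing node `i` in the forest `f`:
follow successors until reaching a root. -/
def rootOf {V : Type*} [Fintype V] (f : V → Option V) (i : V) : V :=
  (fun x => (f x).getD x)^[Fintype.card V] i

/-- The combinatorial forest-matrix entry `ω_{ij} = |F_{ij}| / |F|`. -/
noncomputable def fOmega {V : Type*} [Fintype V] [DecidableEq V]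
    (E : V → V → Prop) (i j : V) : ℝ :=
  (((forests E).filter (fun f => rootOf f i = j)).card : ℝ) / ((forests E).card : ℝ)

/-- Expectation of `g` under a uniformly random spanning converging forest. -/
noncomputable def expVal {V : Type*} [Fintype V] [DecidableEq V]
    (E : V → V → Prop) (g : (V → Option V) → ℝ) : ℝ :=
  (∑ f ∈ forests E, g f) / ((forests E).card : ℝ)

/-- Variance of `g` under a uniformly random spanning converging forest. -/
noncomputable def varVal {V : Type*} [Fintype V] [DecidableEq V]
    (E : V → V → Prop) (g : (V → Option V) → ℝ) : ℝ :=
  expVal E (fun f => (g f - expVal E g) ^ 2)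

/-- The indicator estimator `ω̂_{ij}(φ) = 1_{r_φ(i) = j}`. -/
noncomputable def indEst {V : Type*} [Fintype V] [DecidableEq V]
    (i j : V) (f : V → Option V) : ℝ :=
  if rootOf f i = j then 1 else 0

/-- Out-degree `d_i` of node `i`. -/
def outDeg {V : Type*} [Fintype V] (E : V → V → Prop) [DecidableRel E] (i : V) : ℕ :=
  (Finset.univ.filter (fun j => E i j)).card

/-- In-neighbors `N⁻(j)` of node `j`. -/
def inNbrs {V : Type*} [Fintype V] (E : V → V → Prop) [DecidableRel E] (j : V) : Finset V :=
  Finset.univ.filter (fun k => E k j)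

/-- The out-degree Laplacian `L = D - A`. -/
noncomputable def lap {V : Type*} [Fintype V] [DecidableEq V]
    (E : V → V → Prop) [DecidableRel E] : Matrix V V ℝ :=
  Matrix.of fun i j => (if i = j then (outDeg E i : ℝ) else 0) - (if E i j then (1 : ℝ) else 0)

/-- The forest matrix `Ω = (I + L)⁻¹`. -/
noncomputable def forestMatrix {V : Type*} [Fintype V] [DecidableEq V]
    (E : V → V → Prop) [DecidableRel E] : Matrix V V ℝ :=
  (1 + lap E)⁻¹


/-- the normalized variance of the diagonal estimator satisfies
Var(ω̄_ii(φ))/ω_ii² = 3/((1+d_i)ω_ii) − 2/((1+d_i)ω_ii)² − 1 ≤ 1/8 whenever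
ω_ii > 0, where Var(ω̄_ii(φ)) = 3ω_ii/(1+d_i) − 2/(1+d_i)² − ω_ii². -/
theorem diagEst_normalized_variance_bound (d : ℕ) (w : ℝ) (hw : 0 < w) :
    (3 * w / (1 + (d : ℝ)) - 2 / (1 + (d : ℝ)) ^ 2 - w ^ 2) / w ^ 2
        = 3 / ((1 + (d : ℝ)) * w) - 2 / ((1 + (d : ℝ)) * w) ^ 2 - 1 ∧
    (3 * w / (1 + (d : ℝ)) - 2 / (1 + (d : ℝ)) ^ 2 - w ^ 2) / w ^ 2 ≤ 1 / 8 := by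
  have hD : (0:ℝ) < 1 + d := by positivity
  constructor
  · field_simp
  · rw [div_le_iff₀ (by positivity),
      show (3 * w / (1 + (d:ℝ)) - 2 / (1 + (d:ℝ)) ^ 2 - w ^ 2)
        = (3 * w * (1 + (d:ℝ)) - 2 - w ^ 2 * (1 + (d:ℝ)) ^ 2) / (1 + (d:ℝ)) ^ 2 by
          field_simp,
      div_le_iff₀ (by positivity)]
    nlinarith [sq_nonneg (3 * w * (1 + (d:ℝ)) - 4)]
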